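/- Let m ≥ 5, 2 ≤ ℓ ≤ m/2, 0 ≤ R ≤ (m−ℓ)/(ℓ−1), A := {0,1,m−ℓ+1,…,m}, t := C(ℓ+R,R), and H := 2R+1. Then (HA)^{(t)} ≠ [0, Hm] ∖ (E_t(A) ∪ (Hm − E_t(m−A))); i.e., (HA)^{(t)} is not structured. In particular, the element g := (R+1)(m−ℓ+1)−1 lies in the right-hand side but not in (HA)^{(t)}. -/

import Mathlib

/-- Total representation function of `A = {0, 1, m−ℓ+1, …, m}`: coefficients on the
nonzero elements `1, m−ℓ+1, …, m`. -/
noncomputable def rhoA (m ℓ n : ℕ) : ℕ :=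
  Nat.card {k : Fin (ℓ + 1) → ℕ //
    k 0 * 1 + (∑ i : Fin ℓ, k i.succ * (m - ℓ + 1 + i.val)) = n}

/-- Representation function of `hA`: at most `h` nonzero summands (zeros allowed since
`0 ∈ A`). -/
noncomputable def rhoALe (m ℓ h n : ℕ) : ℕ :=
  Nat.card {k : Fin (ℓ + 1) → ℕ //
    k 0 * 1 + (∑ i : Fin ℓ, k i.succ * (m - ℓ + 1 + i.val)) = n ∧
    (∑ i : Fin (ℓ + 1), k i) ≤ h}

/-- Total representation function of `m − A = {0, 1, …, ℓ−1, m−1, m}`. -/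
noncomputable def rhomA (m ℓ n : ℕ) : ℕ :=
  Nat.card {k : Fin (ℓ + 1) → ℕ //
    ∑ i : Fin (ℓ + 1), k i *
      (if i.val < ℓ - 1 then i.val + 1 else if i.val = ℓ - 1 then m - 1 else m) = n}

lemma card_sum_le (n R : ℕ) :
    Nat.card {x : Fin n → ℕ // ∑ i, x i ≤ R} = (n + R).choose R := by
  have e1 : {x : Fin n → ℕ // ∑ i, x i ≤ R} ≃ {y : Fin (n + 1) → ℕ // ∑ i, y i = R} :=
  { toFun := fun x => ⟨Fin.cons (R - ∑ i, x.1 i) x.1, by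
      rw [Fin.sum_cons]; have := x.2; omega⟩
    invFun := fun y => ⟨Fin.tail y.1, by
      have hy := y.2
      rw [Fin.sum_univ_succ] at hy
      have h2 : ∑ i : Fin n, Fin.tail y.1 i = ∑ i : Fin n, y.1 i.succ := rfl
      omega⟩
    left_inv := fun x => by
      apply Subtype.ext
      simp [Fin.tail_cons]
    right_inv := fun y => by
      apply Subtype.ext
      have hy := y.2
      rw [Fin.sum_univ_succ] at hy
      have h2 : ∑ i : Fin n, Fin.tail y.1 i = ∑ i : Fin n, y.1 i.succ := rfl
      have h0 : R - ∑ i : Fin n, Fin.tail y.1 i = y.1 0 := by omega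
      show (Fin.cons (R - ∑ i : Fin n, Fin.tail y.1 i) (Fin.tail y.1) : Fin (n+1) → ℕ) = y.1
      rw [h0, Fin.cons_self_tail] }
  rw [Nat.card_congr e1, Nat.card_congr (Sym.equivNatSumOfFintype (Fin (n + 1)) R).symm,
    Nat.card_eq_fintype_card, Sym.card_sym_eq_multichoose, Fintype.card_fin, Nat.multichoose_eq]
  congr 1
  omega


/-- With `H = 2R+1`, the set `(HA)^{(t)}` is not structured: the element
`g = (R+1)(m−ℓ+1)−1` lies in `[0,Hm] ∖ (E_t(A) ∪ (Hm − E_t(m−A)))` but not in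
`(HA)^{(t)}`. -/
theorem stmt_14 (m ℓ R : ℕ) (hm : 5 ≤ m) (hl : 2 ≤ ℓ) (hlm : 2 * ℓ ≤ m)
    (hR : (ℓ - 1) * R ≤ m - ℓ) (t : ℕ) (ht : t = (ℓ + R).choose R)
    (H : ℕ) (hH : H = 2 * R + 1) (g : ℕ) (hg : g = (R + 1) * (m - ℓ + 1) - 1) :
    ¬ (∀ n : ℕ, t ≤ rhoALe m ℓ H n ↔
        (n ≤ H * m ∧ t ≤ rhoA m ℓ n ∧ t ≤ rhomA m ℓ (H * m - n))) ∧
    (g ≤ H * m ∧ t ≤ rhoA m ℓ g ∧ t ≤ rhomA m ℓ (H * m - g)) ∧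
    rhoALe m ℓ H g < t := by
  obtain ⟨c, rfl⟩ : ∃ c, ℓ = c + 1 := ⟨ℓ - 1, by omega⟩
  obtain ⟨d, rfl⟩ : ∃ d, m = c + 1 + d := ⟨m - (c + 1), by omega⟩
  subst ht hH
  have hc : 1 ≤ c := by omega
  have hdc : c + 1 ≤ d := by omega
  have hR' : c * R ≤ d := by simpa using hR
  have hsub : c + 1 + d - (c + 1) = d := by omega
  have hg' : g = R * (d + 1) + d := by
    rw [hg, hsub]
    have e : (R + 1) * (d + 1) = R * (d + 1) + d + 1 := by ring
    omega
  have hHm : (2 * R + 1) * (c + 1 + d) = g + (R * (c + 1 + d) + R * c + c + 1) := by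
    rw [hg']; ring
  have hgle : g ≤ (2 * R + 1) * (c + 1 + d) := by omega
  have hN : (2 * R + 1) * (c + 1 + d) - g = R * (c + 1 + d) + R * c + c + 1 := by omega
  -- bounds for the A-side
  have bsum : ∀ x : Fin (c + 1) → ℕ, (∑ i, x i) ≤ R →
      ∑ i : Fin (c + 1), x i * (d + 1 + i.val) ≤ g := by
    intro x hx
    calc ∑ i : Fin (c + 1), x i * (d + 1 + i.val)
        ≤ ∑ i : Fin (c + 1), x i * (d + 1 + c) := by
          apply Finset.sum_le_sum
          intro i _
          exact Nat.mul_le_mul_left _ (by have := i.isLt; omega)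
      _ = (∑ i : Fin (c + 1), x i) * (d + 1 + c) := (Finset.sum_mul _ _ _).symm
      _ ≤ R * (d + 1 + c) := Nat.mul_le_mul_right _ hx
      _ ≤ g := by
          have e3 : R * (d + 1 + c) = R * (d + 1) + c * R := by ring
          omega
  have bcoef : ∀ k : Fin (c + 1 + 1) → ℕ,
      (k 0 * 1 + ∑ i : Fin (c + 1), k i.succ * (d + 1 + i.val) = g) →
      ∑ i : Fin (c + 1), k i.succ ≤ R := by
    intro k hk
    by_contra hlt
    push_neg at hlt
    have h1 : (R + 1) * (d + 1) ≤ (∑ i : Fin (c + 1), k i.succ) * (d + 1) :=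
      Nat.mul_le_mul_right _ (by omega)
    have h2 : (∑ i : Fin (c + 1), k i.succ) * (d + 1)
        = ∑ i : Fin (c + 1), k i.succ * (d + 1) := Finset.sum_mul _ _ _
    have h3 : ∑ i : Fin (c + 1), k i.succ * (d + 1)
        ≤ ∑ i : Fin (c + 1), k i.succ * (d + 1 + i.val) := by
      apply Finset.sum_le_sum
      intro i _
      exact Nat.mul_le_mul_left _ (by omega)
    have e5 : (R + 1) * (d + 1) = R * (d + 1) + d + 1 := by ring
    omega
  -- the equivalence for rhoA at g
  have E : {k : Fin (c + 1 + 1) → ℕ //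
        k 0 * 1 + ∑ i : Fin (c + 1), k i.succ * (d + 1 + i.val) = g}
      ≃ {x : Fin (c + 1) → ℕ // ∑ i, x i ≤ R} :=
  { toFun := fun k => ⟨Fin.tail k.1, by
      have h2 : ∑ i : Fin (c + 1), Fin.tail k.1 i = ∑ i : Fin (c + 1), k.1 i.succ := rfl
      rw [h2]; exact bcoef k.1 k.2⟩
    invFun := fun x => ⟨Fin.cons (g - ∑ i : Fin (c + 1), x.1 i * (d + 1 + i.val)) x.1, by
      have hb := bsum x.1 x.2
      simp only [Fin.cons_zero, Fin.cons_succ, mul_one]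
      omega⟩
    left_inv := fun k => by
      apply Subtype.ext
      have hk := k.2
      have h2 : ∑ i : Fin (c + 1), Fin.tail k.1 i * (d + 1 + i.val)
          = ∑ i : Fin (c + 1), k.1 i.succ * (d + 1 + i.val) := rfl
      have h0 : g - ∑ i : Fin (c + 1), Fin.tail k.1 i * (d + 1 + i.val) = k.1 0 := by omega
      show (Fin.cons (g - ∑ i : Fin (c + 1), Fin.tail k.1 i * (d + 1 + i.val))
        (Fin.tail k.1) : Fin (c + 1 + 1) → ℕ) = k.1
      rw [h0, Fin.cons_self_tail]
    right_inv := fun x => Subtype.ext (funext fun i => rfl) }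
  have hAcard : rhoA (c + 1 + d) (c + 1) g = (c + 1 + R).choose R := by
    unfold rhoA
    simp only [hsub]
    rw [Nat.card_congr E, card_sum_le]
  -- finiteness of the simplex
  haveI finSimp : Finite {x : Fin (c + 1) → ℕ // ∑ i, x i ≤ R} := by
    apply Finite.of_injective
      (fun x : {x : Fin (c + 1) → ℕ // ∑ i, x i ≤ R} =>
        (fun i => (⟨x.1 i, by
          have h1 : x.1 i ≤ ∑ j, x.1 j :=
            Finset.single_le_sum (fun j _ => Nat.zero_le _) (Finset.mem_univ i)
          have := x.2; omega⟩ : Fin (R + 1))))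
    intro a b hab
    apply Subtype.ext
    funext i
    have := congrFun hab i
    simpa using this
  haveI finSA : Finite {k : Fin (c + 1 + 1) → ℕ //
      k 0 * 1 + ∑ i : Fin (c + 1), k i.succ * (d + 1 + i.val) = g} := Finite.of_equiv _ E.symm
  -- rhomA part
  have hmAcard : (c + 1 + R).choose R ≤
      rhomA (c + 1 + d) (c + 1) ((2 * R + 1) * (c + 1 + d) - g) := by
    rw [hN]
    unfold rhomA
    have hc1 : c + 1 - 1 = c := by omega
    simp only [hc1]
    set N' := R * (c + 1 + d) + R * c + c + 1 with hN'
    haveI finT : Finite {k : Fin (c + 1 + 1) → ℕ //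
        ∑ i : Fin (c + 1 + 1), k i *
          (if i.val < c then i.val + 1 else if i.val = c then c + 1 + d - 1 else c + 1 + d)
        = N'} := by
      apply Finite.of_injective
        (fun k : {k : Fin (c + 1 + 1) → ℕ //
            ∑ i : Fin (c + 1 + 1), k i *
              (if i.val < c then i.val + 1 else if i.val = c then c + 1 + d - 1 else c + 1 + d)
            = N'} =>
          (fun i => (⟨k.1 i, by
            have hw : 1 ≤ (if i.val < c then i.val + 1 else
                if i.val = c then c + 1 + d - 1 else c + 1 + d) := by
              split_ifs <;> omega
            have h1 : k.1 i ≤ k.1 i *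
                (if i.val < c then i.val + 1 else
                  if i.val = c then c + 1 + d - 1 else c + 1 + d) :=
              Nat.le_mul_of_pos_right _ hw
            have h2 : k.1 i *
                (if i.val < c then i.val + 1 else
                  if i.val = c then c + 1 + d - 1 else c + 1 + d)
                ≤ ∑ j : Fin (c + 1 + 1), k.1 j *
                  (if j.val < c then j.val + 1 else
                    if j.val = c then c + 1 + d - 1 else c + 1 + d) :=
              Finset.single_le_sum
                (f := fun j : Fin (c + 1 + 1) => k.1 j *
                  (if j.val < c then j.val + 1 else
                    if j.val = c then c + 1 + d - 1 else c + 1 + d))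
                (fun j _ => Nat.zero_le _) (Finset.mem_univ i)
            have := k.2; omega⟩ : Fin (N' + 1))))
      intro a b hab
      apply Subtype.ext
      funext i
      have := congrFun hab i
      simpa using this
    calc (c + 1 + R).choose R = Nat.card {x : Fin (c + 1) → ℕ // ∑ i, x i ≤ R} :=
          (card_sum_le _ _).symm
      _ ≤ _ := by
          apply Nat.card_le_card_of_injective
            (fun x : {x : Fin (c + 1) → ℕ // ∑ i, x i ≤ R} =>
              (⟨Fin.cons (N' - ∑ i : Fin (c + 1), x.1 i *
                  (if i.val + 1 < c then i.val + 1 + 1 else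
                    if i.val + 1 = c then c + 1 + d - 1 else c + 1 + d)) x.1, by
                have hb : ∑ i : Fin (c + 1), x.1 i *
                    (if i.val + 1 < c then i.val + 1 + 1 else
                      if i.val + 1 = c then c + 1 + d - 1 else c + 1 + d) ≤ N' := by
                  calc ∑ i : Fin (c + 1), x.1 i *
                      (if i.val + 1 < c then i.val + 1 + 1 else
                        if i.val + 1 = c then c + 1 + d - 1 else c + 1 + d)
                      ≤ ∑ i : Fin (c + 1), x.1 i * (c + 1 + d) := by
                        apply Finset.sum_le_sum
                        intro i _
                        apply Nat.mul_le_mul_left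
                        split_ifs <;> omega
                    _ = (∑ i : Fin (c + 1), x.1 i) * (c + 1 + d) := (Finset.sum_mul _ _ _).symm
                    _ ≤ R * (c + 1 + d) := Nat.mul_le_mul_right _ x.2
                    _ ≤ N' := by rw [hN']; omega
                rw [Fin.sum_univ_succ]
                simp only [Fin.cons_zero, Fin.cons_succ, Fin.val_zero, Fin.val_succ]
                simp only [show 0 < c by omega, ↓reduceIte]
                simp only [Nat.zero_add, mul_one]
                omega⟩ : {k : Fin (c + 1 + 1) → ℕ //
                  ∑ i : Fin (c + 1 + 1), k i *
                    (if i.val < c then i.val + 1 else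
                      if i.val = c then c + 1 + d - 1 else c + 1 + d) = N'}))
          intro a b hab
          apply Subtype.ext
          have h1 := congrArg Subtype.val hab
          simp only at h1
          have h2 := congrArg Fin.tail h1
          simpa [Fin.tail_cons] using h2
  -- rhoALe part
  have hLe : rhoALe (c + 1 + d) (c + 1) (2 * R + 1) g < (c + 1 + R).choose R := by
    unfold rhoALe
    simp only [hsub]
    set SLe := {k : Fin (c + 1 + 1) → ℕ //
      (k 0 * 1 + ∑ i : Fin (c + 1), k i.succ * (d + 1 + i.val) = g) ∧
      (∑ i : Fin (c + 1 + 1), k i) ≤ 2 * R + 1} with hSLe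
    let incl : SLe → {k : Fin (c + 1 + 1) → ℕ //
        k 0 * 1 + ∑ i : Fin (c + 1), k i.succ * (d + 1 + i.val) = g} :=
      fun k => ⟨k.1, k.2.1⟩
    have hinj : Function.Injective incl := by
      intro a b hab
      have h1 : (incl a).1 = (incl b).1 := congrArg Subtype.val hab
      exact Subtype.ext h1
    haveI finLe : Finite SLe := Finite.of_injective incl hinj
    letI := Fintype.ofFinite SLe
    letI := Fintype.ofFinite {k : Fin (c + 1 + 1) → ℕ //
        k 0 * 1 + ∑ i : Fin (c + 1), k i.succ * (d + 1 + i.val) = g}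
    have hksA : (Fin.cons g (fun _ => 0) : Fin (c + 1 + 1) → ℕ) 0 * 1 +
        ∑ i : Fin (c + 1), (Fin.cons g (fun _ => 0) : Fin (c + 1 + 1) → ℕ) i.succ *
          (d + 1 + i.val) = g := by
      simp [Fin.cons_zero, Fin.cons_succ]
    have hns : ¬ Function.Surjective incl := by
      intro hs
      obtain ⟨⟨k, hk1, hk2⟩, hkk⟩ := hs ⟨Fin.cons g (fun _ => 0), hksA⟩
      have hkval : k = (Fin.cons g (fun _ => 0) : Fin (c + 1 + 1) → ℕ) :=
        congrArg Subtype.val hkk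
      have hsum : ∑ i : Fin (c + 1 + 1), k i = g := by
        rw [hkval, Fin.sum_univ_succ]
        simp
      have h3 : R * 3 ≤ R * (d + 1) := Nat.mul_le_mul_left _ (by omega)
      omega
    calc Nat.card SLe = Fintype.card SLe := Nat.card_eq_fintype_card
      _ < Fintype.card {k : Fin (c + 1 + 1) → ℕ //
            k 0 * 1 + ∑ i : Fin (c + 1), k i.succ * (d + 1 + i.val) = g} :=
          Fintype.card_lt_of_injective_not_surjective incl hinj hns
      _ = Nat.card {k : Fin (c + 1 + 1) → ℕ //
            k 0 * 1 + ∑ i : Fin (c + 1), k i.succ * (d + 1 + i.val) = g} :=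
          Nat.card_eq_fintype_card.symm
      _ = (c + 1 + R).choose R := by rw [Nat.card_congr E, card_sum_le]
  refine ⟨?_, ⟨hgle, le_of_eq hAcard.symm, hmAcard⟩, hLe⟩
  intro hall
  have h2 := (hall g).mpr ⟨hgle, le_of_eq hAcard.symm, hmAcard⟩
  omega
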